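/- If P, Q, R are closed under stuttering, then □(↑Q ∧ ◇↑R ⇒ ○(¬↑R U P) ∧ ¬↑R) is closed under stuttering, where ↑X := ¬X ∧ ○X. -/
import Mathlib


def State := String → Bool

def StSeq := ℕ → State

def drop (k : ℕ) (s : StSeq) : StSeq := fun n => s (k + n)

def stutter (s : StSeq) (i : ℕ) : StSeq := fun n => if n ≤ i then s n else s (n - 1)

def CUS (F : StSeq → Prop) : Prop := ∀ (s : StSeq) (i : ℕ), F s ↔ F (stutter s i)

def Var (a : String) : StSeq → Prop := fun s => s 0 a = true

def Not' (F : StSeq → Prop) : StSeq → Prop := fun s => ¬ F s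

def And' (F G : StSeq → Prop) : StSeq → Prop := fun s => F s ∧ G s

def Or' (F G : StSeq → Prop) : StSeq → Prop := fun s => F s ∨ G s

def Imp' (F G : StSeq → Prop) : StSeq → Prop := fun s => F s → G s

def Iff' (F G : StSeq → Prop) : StSeq → Prop := fun s => F s ↔ G s

def Next (F : StSeq → Prop) : StSeq → Prop := fun s => F (drop 1 s)

def Always (F : StSeq → Prop) : StSeq → Prop := fun s => ∀ k, F (drop k s)

def Ev (F : StSeq → Prop) : StSeq → Prop := fun s => ∃ k, F (drop k s)

def Until' (F G : StSeq → Prop) : StSeq → Prop :=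
  fun s => ∃ k, G (drop k s) ∧ ∀ j < k, F (drop j s)

def Up (F : StSeq → Prop) : StSeq → Prop := And' (Not' F) (Next F)

def Down (F : StSeq → Prop) : StSeq → Prop := And' F (Next (Not' F))

def AnyEdge (F : StSeq → Prop) : StSeq → Prop := Or' (Up F) (Down F)
lemma drop_zero (t : StSeq) : drop 0 t = t := by funext n; simp [drop]

lemma drop_stutter_le {k i : ℕ} (h : k ≤ i) (s : StSeq) :
    drop k (stutter s i) = stutter (drop k s) (i - k) := by
  funext n
  simp only [drop, stutter]
  split_ifs with h1 h2 h2
  · rfl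
  · exact absurd h1 (by omega)
  · exact absurd h2 (by omega)
  · have e : k + n - 1 = k + (n - 1) := by omega
    rw [e]

lemma drop_stutter_gt {k i : ℕ} (h : i < k) (s : StSeq) :
    drop k (stutter s i) = drop (k - 1) s := by
  funext n
  simp only [drop, stutter]
  split_ifs with h1
  · exact absurd h1 (by omega)
  · have e : k + n - 1 = k - 1 + n := by omega
    rw [e]

lemma up_stutter_zero {F : StSeq → Prop} (hF : CUS F) (t : StSeq) :
    ¬ Up F (stutter t 0) := by
  rintro ⟨h1, h2⟩
  simp only [Next] at h2
  simp only [Not'] at h1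
  rw [show drop 1 (stutter t 0) = drop 0 t from drop_stutter_gt (by omega) t, drop_zero] at h2
  exact h1 ((hF t 0).mp h2)

lemma up_stutter_pos {F : StSeq → Prop} (hF : CUS F) (t : StSeq) {j : ℕ} (hj : 1 ≤ j) :
    Up F (stutter t j) ↔ Up F t := by
  have h1 : drop 1 (stutter t j) = stutter (drop 1 t) (j - 1) := drop_stutter_le hj t
  simp only [Up, And', Not', Next]
  constructor
  · rintro ⟨a, b⟩
    rw [h1] at b
    exact ⟨fun c => a ((hF t j).mp c), (hF (drop 1 t) (j-1)).mpr b⟩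
  · rintro ⟨a, b⟩
    refine ⟨fun c => a ((hF t j).mpr c), ?_⟩
    rw [h1]; exact (hF (drop 1 t) (j-1)).mp b

lemma ev_up_stutter {F : StSeq → Prop} (hF : CUS F) (t : StSeq) (j : ℕ) :
    Ev (Up F) (stutter t j) ↔ Ev (Up F) t := by
  constructor
  · rintro ⟨k, hk⟩
    rcases lt_trichotomy k j with h | h | h
    · refine ⟨k, ?_⟩
      rw [drop_stutter_le (le_of_lt h)] at hk
      exact (up_stutter_pos hF _ (by omega)).mp hk
    · subst h
      rw [drop_stutter_le le_rfl, Nat.sub_self] at hk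
      exact absurd hk (up_stutter_zero hF _)
    · refine ⟨k - 1, ?_⟩
      rwa [drop_stutter_gt h] at hk
  · rintro ⟨k, hk⟩
    rcases lt_or_ge k j with h | h
    · refine ⟨k, ?_⟩
      rw [drop_stutter_le (le_of_lt h)]
      exact (up_stutter_pos hF _ (by omega)).mpr hk
    · refine ⟨k + 1, ?_⟩
      rw [drop_stutter_gt (by omega)]
      simpa using hk

lemma until_stutter {P R : StSeq → Prop} (hP : CUS P) (hR : CUS R) (t : StSeq) (j : ℕ) :
    Until' (Not' (Up R)) P (stutter t j) ↔ Until' (Not' (Up R)) P t := by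
  constructor
  · rintro ⟨k, hk, hall⟩
    rcases le_or_gt k j with h | h
    · refine ⟨k, ?_, ?_⟩
      · rw [drop_stutter_le h] at hk
        exact (hP _ _).mpr hk
      · intro m hm
        have := hall m hm
        rw [drop_stutter_le (by omega)] at this
        exact fun c => this ((up_stutter_pos hR _ (by omega)).mpr c)
    · refine ⟨k - 1, ?_, ?_⟩
      · rwa [drop_stutter_gt h] at hk
      · intro m hm
        rcases lt_or_ge m j with hmj | hmj
        · have := hall m (by omega)
          rw [drop_stutter_le (le_of_lt hmj)] at this
          exact fun c => this ((up_stutter_pos hR _ (by omega)).mpr c)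
        · have := hall (m + 1) (by omega)
          rw [drop_stutter_gt (by omega)] at this
          simpa using this
  · rintro ⟨k, hk, hall⟩
    rcases le_or_gt k j with h | h
    · refine ⟨k, ?_, ?_⟩
      · rw [drop_stutter_le h]
        exact (hP _ _).mp hk
      · intro m hm
        rw [drop_stutter_le (by omega)]
        rcases Nat.lt_or_ge m j with hmj | hmj
        · exact fun c => hall m hm ((up_stutter_pos hR _ (by omega)).mp c)
        · have : m = j := by omega
          subst this
          rw [Nat.sub_self]
          exact up_stutter_zero hR _
    · refine ⟨k + 1, ?_, ?_⟩
      · rw [drop_stutter_gt (by omega)]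
        simpa using hk
      · intro m hm
        rcases lt_trichotomy m j with hmj | hmj | hmj
        · rw [drop_stutter_le (le_of_lt hmj)]
          exact fun c => hall m (by omega) ((up_stutter_pos hR _ (by omega)).mp c)
        · subst hmj
          rw [drop_stutter_le le_rfl, Nat.sub_self]
          exact up_stutter_zero hR _
        · rw [drop_stutter_gt hmj]
          exact hall (m - 1) (by omega)

def Gbody (P Q R : StSeq → Prop) : StSeq → Prop :=
  Imp' (And' (Up Q) (Ev (Up R)))
    (And' (Next (Until' (Not' (Up R)) P)) (Not' (Up R)))

lemma gbody_stutter_pos {P Q R : StSeq → Prop} (hP : CUS P) (hQ : CUS Q) (hR : CUS R)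
    (t : StSeq) {j : ℕ} (hj : 1 ≤ j) : Gbody P Q R (stutter t j) ↔ Gbody P Q R t := by
  have hnext : drop 1 (stutter t j) = stutter (drop 1 t) (j - 1) := drop_stutter_le hj t
  simp only [Gbody, Imp', And', Next, Not']
  rw [up_stutter_pos hQ t hj, ev_up_stutter hR t j, up_stutter_pos hR t hj, hnext,
    until_stutter hP hR (drop 1 t) (j - 1)]

theorem pattern_D1 (P Q R : StSeq → Prop) (hP : CUS P) (hQ : CUS Q) (hR : CUS R) :
    CUS (Always (Imp' (And' (Up Q) (Ev (Up R)))
      (And' (Next (Until' (Not' (Up R)) P)) (Not' (Up R))))) := by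
  intro s i
  show (∀ k, Gbody P Q R (drop k s)) ↔ (∀ k, Gbody P Q R (drop k (stutter s i)))
  constructor
  · intro H k
    rcases lt_trichotomy k i with h | h | h
    · rw [drop_stutter_le (le_of_lt h)]
      exact (gbody_stutter_pos hP hQ hR _ (by omega)).mpr (H k)
    · subst h
      rw [drop_stutter_le le_rfl, Nat.sub_self]
      rintro ⟨hq, -⟩
      exact absurd hq (up_stutter_zero hQ _)
    · rw [drop_stutter_gt h]
      exact H (k - 1)
  · intro H k
    rcases lt_or_ge k i with h | h
    · have := H k
      rw [drop_stutter_le (le_of_lt h)] at this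
      exact (gbody_stutter_pos hP hQ hR _ (by omega)).mp this
    · have := H (k + 1)
      rw [drop_stutter_gt (by omega)] at this
      simpa using this
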